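/- Let g = g_{5,3,2(λ)}. For every F ∈ g*, the skew-symmetric bilinear form B_F has rank either 0 or 2; equivalently, the subspace {X ∈ g : F([X, Y]) = 0 for all Y ∈ g} has dimension 5 or 3. (This is the infinitesimal MD-condition: every coadjoint orbit of the corresponding connected simply connected Lie group G_{5,3,2(λ)} has dimension 0 or 2, so it is an MD5-group.) -/

import Mathlib

open scoped Matrix

/-- The Lie bracket of g_{5,3,2(λ)}: [X1,X2] = X3, [X2,X3] = X3, [X2,X4] = X4, [X2,X5] = λ·X5,
written in coordinates with respect to the basis (X₁, X₂, X₃, X₄, X₅) (all other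
brackets of basis vectors vanish); it is the bilinear extension of the structure
constants above. -/
def bracketg532 (l : ℝ) (U V : Fin 5 → ℝ) : Fin 5 → ℝ :=
  ![0, 0,
    (U 0 * V 1 - U 1 * V 0) + (U 1 * V 2 - U 2 * V 1),
    U 1 * V 3 - U 3 * V 1,
    l * (U 1 * V 4 - U 4 * V 1)]

/-- The matrix (in the basis (X₁, ..., X₅)) of the skew-symmetric bilinear form
B_F(X, Y) = F([X, Y]); the functional F is identified with its coordinate vector with
respect to the dual basis, acting by the dot product. -/
def BFg532 (l : ℝ) (F : Fin 5 → ℝ) : Matrix (Fin 5) (Fin 5) ℝ :=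
  Matrix.of fun i j => F ⬝ᵥ bracketg532 l (Pi.single i 1) (Pi.single j 1)

/-- The radical {X ∈ g | F([X, Y]) = 0 for all Y ∈ g} of the form B_F, as a subspace. -/
def radg532 (l : ℝ) (F : Fin 5 → ℝ) : Submodule ℝ (Fin 5 → ℝ) where
  carrier := {X | ∀ Y : Fin 5 → ℝ, F ⬝ᵥ bracketg532 l X Y = 0}
  zero_mem' := by
    intro Y
    simp [bracketg532, dotProduct, Fin.sum_univ_five]
  add_mem' := by
    intro a b ha hb Y
    have h1 := ha Y
    have h2 := hb Y
    simp only [bracketg532, dotProduct, Fin.sum_univ_five, Matrix.cons_val_zero,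
      Matrix.cons_val_one, Matrix.head_cons, Matrix.cons_val_two, Matrix.tail_cons,
      Matrix.cons_val_three, Matrix.cons_val_four, Pi.add_apply] at h1 h2 ⊢
    linear_combination h1 + h2
  smul_mem' := by
    intro c a ha Y
    have h1 := ha Y
    simp only [bracketg532, dotProduct, Fin.sum_univ_five, Matrix.cons_val_zero,
      Matrix.cons_val_one, Matrix.head_cons, Matrix.cons_val_two, Matrix.tail_cons,
      Matrix.cons_val_three, Matrix.cons_val_four, Pi.smul_apply, smul_eq_mul] at h1 ⊢
    linear_combination c * h1

lemma BF_eq (l : ℝ) (F : Fin 5 → ℝ) :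
    BFg532 l F = !![0, F 2, 0, 0, 0;
                    -F 2, 0, F 2, F 3, l * F 4;
                    0, -F 2, 0, 0, 0;
                    0, -F 3, 0, 0, 0;
                    0, -(l * F 4), 0, 0, 0] := by
  ext i j
  fin_cases i <;> fin_cases j <;>
    simp [BFg532, bracketg532, dotProduct, Fin.sum_univ_five, Pi.single_apply,
      Matrix.vecHead, Matrix.vecTail] <;> ring

lemma rad_eq_ker (l : ℝ) (F : Fin 5 → ℝ) :
    radg532 l F = LinearMap.ker (BFg532 l F).mulVecLin := by
  ext X
  rw [BF_eq]
  simp only [LinearMap.mem_ker, Matrix.mulVecLin_apply]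
  constructor
  · intro hX
    have h0 := hX ![1,0,0,0,0]
    have h1 := hX ![0,1,0,0,0]
    have h2 := hX ![0,0,1,0,0]
    have h3 := hX ![0,0,0,1,0]
    have h4 := hX ![0,0,0,0,1]
    simp [-mul_eq_zero, bracketg532, dotProduct, Fin.sum_univ_five] at h0 h1 h2 h3 h4
    funext i
    fin_cases i <;>
      simp [-mul_eq_zero, Matrix.mulVec, dotProduct, Fin.sum_univ_five]
    all_goals linarith [h0, h1, h2, h3, h4]
  · intro hX Y
    have h0 := congrFun hX 0
    have h1 := congrFun hX 1
    have h2 := congrFun hX 2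
    have h3 := congrFun hX 3
    have h4 := congrFun hX 4
    simp [-mul_eq_zero, Matrix.mulVec, dotProduct, Fin.sum_univ_five] at h0 h1 h2 h3 h4
    simp [bracketg532, dotProduct, Fin.sum_univ_five]
    linear_combination (Y 2 - Y 0) * h0 + (-Y 1) * h1 + Y 3 * h3 + Y 4 * h4

/-- For every functional F, the skew-symmetric form B_F has rank 0 or 2; equivalently,
its radical {X | F([X, Y]) = 0 for all Y} has dimension 5 or 3 (the infinitesimal
MD-condition: every coadjoint orbit has dimension 0 or 2). -/
theorem md_condition_g532 (l : ℝ) (hl0 : l ≠ 0) (hl1 : l ≠ 1) (F : Fin 5 → ℝ) :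
    ((BFg532 l F).rank = 0 ∨ (BFg532 l F).rank = 2) ∧
    (Module.finrank ℝ (radg532 l F) = 5 ∨ Module.finrank ℝ (radg532 l F) = 3) := by
  by_cases hF : F 2 = 0 ∧ F 3 = 0 ∧ F 4 = 0
  · obtain ⟨h2, h3, h4⟩ := hF
    have hB : BFg532 l F = 0 := by
      rw [BF_eq, h2, h3, h4]
      ext i j
      fin_cases i <;> fin_cases j <;> simp [Matrix.vecHead, Matrix.vecTail]
    have hrad : radg532 l F = ⊤ := by
      rw [rad_eq_ker, hB]
      simp
    refine ⟨Or.inl ?_, Or.inl ?_⟩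
    · rw [hB]; exact Matrix.rank_zero
    · rw [hrad, finrank_top]; exact Module.finrank_fin_fun ℝ
  · set M : Matrix (Fin 2) (Fin 5) ℝ := !![0,1,0,0,0; -F 2,0,F 2,F 3,l*F 4] with hMdef
    set N : Matrix (Fin 5) (Fin 2) ℝ := !![F 2,0; 0,1; -F 2,0; -F 3,0; -(l*F 4),0] with hNdef
    have hBM : BFg532 l F = N * M := by
      rw [BF_eq]
      ext i j
      fin_cases i <;> fin_cases j <;>
        simp [hMdef, hNdef, Matrix.mul_apply, Fin.sum_univ_two, Matrix.vecHead, Matrix.vecTail] <;> ring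
    have hker : LinearMap.ker (BFg532 l F).mulVecLin = LinearMap.ker M.mulVecLin := by
      ext X
      simp only [LinearMap.mem_ker, Matrix.mulVecLin_apply]
      constructor
      · intro hX
        have h0 := congrFun hX 0
        have h1 := congrFun hX 1
        have h3 := congrFun hX 3
        have h4 := congrFun hX 4
        rw [BF_eq] at h0 h1 h3 h4
        simp [-mul_eq_zero, Matrix.mulVec, dotProduct, Fin.sum_univ_five]
          at h0 h1 h3 h4
        have hX1 : X 1 = 0 := by
          by_cases hf2 : F 2 = 0
          · by_cases hf3 : F 3 = 0
            · have hf4 : F 4 ≠ 0 := fun h => hF ⟨hf2, hf3, h⟩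
              simpa [hf4, hl0] using h4
            · simpa [hf3] using h3
          · simpa [hf2] using h0
        funext i
        fin_cases i <;>
          simp [-mul_eq_zero, hMdef, Matrix.mulVec, dotProduct, Fin.sum_univ_five] <;>
          linarith [h1, hX1]
      · intro hX
        rw [hBM, ← Matrix.mulVec_mulVec, hX, Matrix.mulVec_zero]
    have hsurj : Function.Surjective M.mulVecLin := by
      intro c
      by_cases hf2 : F 2 = 0
      · by_cases hf3 : F 3 = 0
        · have hf4 : F 4 ≠ 0 := fun h => hF ⟨hf2, hf3, h⟩
          refine ⟨![0, c 0, 0, 0, c 1 / (l * F 4)], ?_⟩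
          funext i
          fin_cases i <;>
            simp [hMdef, Matrix.mulVec, dotProduct, Fin.sum_univ_five, hf2, hf3] <;>
            field_simp
        · refine ⟨![0, c 0, 0, c 1 / F 3, 0], ?_⟩
          funext i
          fin_cases i <;>
            simp [hMdef, Matrix.mulVec, dotProduct, Fin.sum_univ_five, hf2] <;>
            field_simp
      · refine ⟨![-(c 1) / F 2, c 0, 0, 0, 0], ?_⟩
        funext i
        fin_cases i <;>
          simp [hMdef, Matrix.mulVec, dotProduct, Fin.sum_univ_five] <;>
          field_simp
    have hkM : Module.finrank ℝ (LinearMap.ker M.mulVecLin) = 3 := by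
      have h := LinearMap.finrank_range_add_finrank_ker M.mulVecLin
      rw [LinearMap.range_eq_top.mpr hsurj, finrank_top, Module.finrank_fin_fun,
        Module.finrank_fin_fun] at h
      omega
    have hrk : (BFg532 l F).rank = 2 := by
      have h := LinearMap.finrank_range_add_finrank_ker (BFg532 l F).mulVecLin
      rw [hker, hkM, Module.finrank_fin_fun] at h
      rw [Matrix.rank]
      omega
    refine ⟨Or.inr hrk, Or.inr ?_⟩
    rw [rad_eq_ker, hker]
    exact hkM
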